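/- (C_n sequence.) Let n ≥ 3 be an integer. On ℝ^{2+n} = ℝ³ × ℝ^{n−1} (d = 3 scale factors, n−1 dilatons φ¹,…,φ^{n−1}) consider the n+2 wall forms, indexed by −1, 0, 1, …, n: w_{−1} = e₃ − e₂, w₀ = e₂ − e₁, w₁ = e₁ − (√2/2)φ^{n−1}, w_j = (√2/2)(φ^{n−j+1} − φ^{n−j}) for 2 ≤ j ≤ n−1, and w_n = √2 φ¹. Then (w_{−1}|w_{−1}) = (w₀|w₀) = (w_n|w_n) = 2 and (w_j|w_j) = 1 for 1 ≤ j ≤ n−1, and the Cartan matrix A_{ij} = 2(w_i|w_j)/(w_i|w_i) has entries: A_{ii} = 2; A_{−1,0} = A_{0,−1} = −1; A_{0,1} = −1 and A_{1,0} = −2; A_{j,j+1} = A_{j+1,j} = −1 for 1 ≤ j ≤ n−2; A_{n−1,n} = −2 and A_{n,n−1} = −1; all other entries 0. This is the generalized Cartan matrix of the overextension C_n^∧∧. -/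

import Mathlib

/-- The wall scalar product on `ℝ³ × ℝ^{n−1}` (`d = 3` scale factors, `n−1` dilatons):
`(w|w') = Σᵢ wᵢw'ᵢ − (1/2)(Σᵢ wᵢ)(Σᵢ w'ᵢ) + Σ_α w̃_α w̃'_α`. -/
noncomputable def wallIPC (n : ℕ) (w w' : (Fin 3 → ℝ) × (Fin (n - 1) → ℝ)) : ℝ :=
  (∑ i, w.1 i * w'.1 i) - (1 / 2) * (∑ i, w.1 i) * (∑ i, w'.1 i)
    + ∑ α, w.2 α * w'.2 α


noncomputable def gPartC : ℕ → Fin 3 → ℝ := fun p =>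
  if p = 0 then fun l => (if l.val = 2 then (1:ℝ) else 0) - (if l.val = 1 then 1 else 0)
  else if p = 1 then fun l => (if l.val = 1 then (1:ℝ) else 0) - (if l.val = 0 then 1 else 0)
  else if p = 2 then fun l => if l.val = 0 then (1:ℝ) else 0
  else fun _ => 0
def aIC (n p : ℕ) : ℕ := if p = 2 then n - 2 else if 3 ≤ p ∧ p ≤ n then n + 1 - p else 0
def bIC (n p : ℕ) : ℕ := if 3 ≤ p ∧ p ≤ n then n - p else 0
noncomputable def XC (n p : ℕ) : ℝ :=
  if p = 2 then -(Real.sqrt 2 / 2) else if 3 ≤ p ∧ p ≤ n then Real.sqrt 2 / 2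
  else if p = n + 1 then Real.sqrt 2 else 0
noncomputable def YC (n p : ℕ) : ℝ := if 3 ≤ p ∧ p ≤ n then -(Real.sqrt 2 / 2) else 0
noncomputable def gIPC (p q : ℕ) : ℝ :=
  (∑ l, gPartC p l * gPartC q l) - (1/2) * (∑ l, gPartC p l) * (∑ l, gPartC q l)
noncomputable def dIPC (n p q : ℕ) : ℝ :=
  (if aIC n p = aIC n q then XC n p * XC n q else 0)
  + (if aIC n p = bIC n q then XC n p * YC n q else 0)
  + (if bIC n p = aIC n q then YC n p * XC n q else 0)
  + (if bIC n p = bIC n q then YC n p * YC n q else 0)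
noncomputable def ipT (n p q : ℕ) : ℝ :=
  if p = q then (if p ≤ 1 ∨ p = n + 1 then 2 else 1)
  else if (p = 0 ∧ q = 1) ∨ (q = 0 ∧ p = 1) then -1
  else if (p = 1 ∧ q = 2) ∨ (p = 2 ∧ q = 1) then -1
  else if (p + 1 = q ∨ q + 1 = p) ∧ 2 ≤ p ∧ 2 ≤ q ∧ p ≤ n ∧ q ≤ n then -(1/2)
  else if (p = n ∧ q = n + 1) ∨ (p = n + 1 ∧ q = n) then -1
  else 0
lemma gPartC_hi (p : ℕ) (hp : 3 ≤ p) : gPartC p = fun _ => 0 := by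
  unfold gPartC
  rw [if_neg (by omega), if_neg (by omega), if_neg (by omega)]
lemma gIPC_hi_left (p q : ℕ) (hp : 3 ≤ p) : gIPC p q = 0 := by
  simp [gIPC, gPartC_hi p hp]
lemma gIPC_hi_right (p q : ℕ) (hq : 3 ≤ q) : gIPC p q = 0 := by
  simp [gIPC, gPartC_hi q hq]
lemma g00 : gIPC 0 0 = 2 := by
  simp only [gIPC, gPartC, Fin.sum_univ_three]; norm_num
lemma g01 : gIPC 0 1 = -1 := by
  simp only [gIPC, gPartC, Fin.sum_univ_three]; norm_num [show (2 : Fin 3) ≠ 0 by decide]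
lemma g02 : gIPC 0 2 = 0 := by
  simp only [gIPC, gPartC, Fin.sum_univ_three]; norm_num [show (2 : Fin 3) ≠ 0 by decide]
lemma g10 : gIPC 1 0 = -1 := by
  simp only [gIPC, gPartC, Fin.sum_univ_three]; norm_num [show (2 : Fin 3) ≠ 0 by decide]
lemma g11 : gIPC 1 1 = 2 := by
  simp only [gIPC, gPartC, Fin.sum_univ_three]; norm_num [show (2 : Fin 3) ≠ 0 by decide]
lemma g12 : gIPC 1 2 = -1 := by
  simp only [gIPC, gPartC, Fin.sum_univ_three]; norm_num [show (2 : Fin 3) ≠ 0 by decide]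
lemma g20 : gIPC 2 0 = 0 := by
  simp only [gIPC, gPartC, Fin.sum_univ_three]; norm_num [show (2 : Fin 3) ≠ 0 by decide]
lemma g21 : gIPC 2 1 = -1 := by
  simp only [gIPC, gPartC, Fin.sum_univ_three]; norm_num [show (2 : Fin 3) ≠ 0 by decide]
lemma g22 : gIPC 2 2 = 1/2 := by
  simp only [gIPC, gPartC, Fin.sum_univ_three]; norm_num [show (2 : Fin 3) ≠ 0 by decide]
lemma aIC2 (n : ℕ) : aIC n 2 = n - 2 := by simp [aIC]
lemma bIC2 (n : ℕ) : bIC n 2 = 0 := by simp [bIC]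
lemma XC2 (n : ℕ) : XC n 2 = -(Real.sqrt 2 / 2) := by simp [XC]
lemma YC_lo (n p : ℕ) (hp : ¬(3 ≤ p ∧ p ≤ n)) : YC n p = 0 := if_neg hp
lemma XC_lo (n p : ℕ) (hn : 3 ≤ n) (hp : p ≤ 1) : XC n p = 0 := by
  unfold XC; split_ifs <;> first | rfl | (exfalso; omega)
lemma dIPC_lo_left (n p q : ℕ) (hn : 3 ≤ n) (hp : p ≤ 1) : dIPC n p q = 0 := by
  simp [dIPC, XC_lo n p hn hp, YC_lo n p (by omega)]
lemma dIPC_lo_right (n p q : ℕ) (hn : 3 ≤ n) (hq : q ≤ 1) : dIPC n p q = 0 := by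
  simp [dIPC, XC_lo n q hn hq, YC_lo n q (by omega)]
lemma aIC_mid (n p : ℕ) (h3 : 3 ≤ p) (hpn : p ≤ n) : aIC n p = n + 1 - p := by
  simp [aIC, h3, hpn, show ¬(p = 2) by omega]
lemma bIC_mid (n p : ℕ) (h3 : 3 ≤ p) (hpn : p ≤ n) : bIC n p = n - p := by
  simp [bIC, h3, hpn]
lemma XC_mid (n p : ℕ) (h3 : 3 ≤ p) (hpn : p ≤ n) : XC n p = Real.sqrt 2 / 2 := by
  simp [XC, h3, hpn, show ¬(p = 2) by omega]
lemma YC_mid (n p : ℕ) (h3 : 3 ≤ p) (hpn : p ≤ n) : YC n p = -(Real.sqrt 2 / 2) := by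
  simp [YC, h3, hpn]
lemma aIC_top (n : ℕ) (hn : 3 ≤ n) : aIC n (n + 1) = 0 := by
  simp [aIC, show ¬(n+1 = 2) by omega, show ¬(3 ≤ n+1 ∧ n+1 ≤ n) by omega]
lemma bIC_top (n : ℕ) (hn : 3 ≤ n) : bIC n (n + 1) = 0 := by
  simp [bIC, show ¬(3 ≤ n+1 ∧ n+1 ≤ n) by omega]
lemma XC_top (n : ℕ) (hn : 3 ≤ n) : XC n (n + 1) = Real.sqrt 2 := by
  simp [XC, show ¬(n+1 = 2) by omega, show ¬(3 ≤ n+1 ∧ n+1 ≤ n) by omega]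
lemma YC_top (n : ℕ) (hn : 3 ≤ n) : YC n (n + 1) = 0 := YC_lo n (n + 1) (by omega)

set_option maxHeartbeats 2000000 in
lemma ip_val (n : ℕ) (hn : 3 ≤ n) (p q : ℕ) (hp : p < n + 2) (hq : q < n + 2) :
    gIPC p q + dIPC n p q = ipT n p q := by
  have sq2 : Real.sqrt 2 * Real.sqrt 2 = 2 := Real.mul_self_sqrt (by norm_num)
  have hY2 : YC n 2 = 0 := YC_lo n 2 (by omega)
  have hP : p = 0 ∨ p = 1 ∨ p = 2 ∨ (3 ≤ p ∧ p ≤ n) ∨ p = n + 1 := by omega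
  have hQ : q = 0 ∨ q = 1 ∨ q = 2 ∨ (3 ≤ q ∧ q ≤ n) ∨ q = n + 1 := by omega
  rcases hP with rfl | rfl | rfl | ⟨hp3, hpn⟩ | rfl
  · rw [dIPC_lo_left n 0 q hn (by omega)]
    rcases hQ with rfl | rfl | rfl | ⟨hq3, hqn⟩ | rfl
    · rw [g00]; unfold ipT; split_ifs <;> first | (exfalso; omega) | (norm_num; done) | (exfalso; assumption) | (exfalso; simp only [false_and, and_false, false_or, or_false, true_and, and_true, true_or, or_true, not_true, not_false_iff] at *; all_goals omega)
    · rw [g01]; unfold ipT; split_ifs <;> first | (exfalso; omega) | (norm_num; done) | (exfalso; assumption) | (exfalso; simp only [false_and, and_false, false_or, or_false, true_and, and_true, true_or, or_true, not_true, not_false_iff] at *; all_goals omega)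
    · rw [g02]; unfold ipT; split_ifs <;> first | (exfalso; omega) | (norm_num; done) | (exfalso; assumption) | (exfalso; simp only [false_and, and_false, false_or, or_false, true_and, and_true, true_or, or_true, not_true, not_false_iff] at *; all_goals omega)
    · rw [gIPC_hi_right 0 q hq3]; unfold ipT; split_ifs <;> first | (exfalso; omega) | (norm_num; done) | (exfalso; assumption) | (exfalso; simp only [false_and, and_false, false_or, or_false, true_and, and_true, true_or, or_true, not_true, not_false_iff] at *; all_goals omega)
    · rw [gIPC_hi_right 0 (n+1) (by omega)]; unfold ipT; split_ifs <;> first | (exfalso; omega) | (norm_num; done) | (exfalso; assumption) | (exfalso; simp only [false_and, and_false, false_or, or_false, true_and, and_true, true_or, or_true, not_true, not_false_iff] at *; all_goals omega)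
  · rw [dIPC_lo_left n 1 q hn (by omega)]
    rcases hQ with rfl | rfl | rfl | ⟨hq3, hqn⟩ | rfl
    · rw [g10]; unfold ipT; split_ifs <;> first | (exfalso; omega) | (norm_num; done) | (exfalso; assumption) | (exfalso; simp only [false_and, and_false, false_or, or_false, true_and, and_true, true_or, or_true, not_true, not_false_iff] at *; all_goals omega)
    · rw [g11]; unfold ipT; split_ifs <;> first | (exfalso; omega) | (norm_num; done) | (exfalso; assumption) | (exfalso; simp only [false_and, and_false, false_or, or_false, true_and, and_true, true_or, or_true, not_true, not_false_iff] at *; all_goals omega)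
    · rw [g12]; unfold ipT; split_ifs <;> first | (exfalso; omega) | (norm_num; done) | (exfalso; assumption) | (exfalso; simp only [false_and, and_false, false_or, or_false, true_and, and_true, true_or, or_true, not_true, not_false_iff] at *; all_goals omega)
    · rw [gIPC_hi_right 1 q hq3]; unfold ipT; split_ifs <;> first | (exfalso; omega) | (norm_num; done) | (exfalso; assumption) | (exfalso; simp only [false_and, and_false, false_or, or_false, true_and, and_true, true_or, or_true, not_true, not_false_iff] at *; all_goals omega)
    · rw [gIPC_hi_right 1 (n+1) (by omega)]; unfold ipT; split_ifs <;> first | (exfalso; omega) | (norm_num; done) | (exfalso; assumption) | (exfalso; simp only [false_and, and_false, false_or, or_false, true_and, and_true, true_or, or_true, not_true, not_false_iff] at *; all_goals omega)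
  · rcases hQ with rfl | rfl | rfl | ⟨hq3, hqn⟩ | rfl
    · rw [g20, dIPC_lo_right n 2 0 hn (by omega)]; unfold ipT; split_ifs <;> first | (exfalso; omega) | (norm_num; done) | (exfalso; assumption) | (exfalso; simp only [false_and, and_false, false_or, or_false, true_and, and_true, true_or, or_true, not_true, not_false_iff] at *; all_goals omega)
    · rw [g21, dIPC_lo_right n 2 1 hn (by omega)]; unfold ipT; split_ifs <;> first | (exfalso; omega) | (norm_num; done) | (exfalso; assumption) | (exfalso; simp only [false_and, and_false, false_or, or_false, true_and, and_true, true_or, or_true, not_true, not_false_iff] at *; all_goals omega)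
    · have hd : dIPC n 2 2 = 1/2 := by
        unfold dIPC
        simp only [aIC2, bIC2, XC2, hY2, zero_mul, mul_zero, ite_self]
        split_ifs <;> first | (exfalso; omega) | (norm_num; done) | linear_combination sq2/4 | linear_combination -sq2/4 | linear_combination sq2/2 | linear_combination -sq2/2 | linear_combination sq2 | linear_combination -sq2 | (exfalso; assumption) | (exfalso; simp only [false_and, and_false, false_or, or_false, true_and, and_true, true_or, or_true, not_true, not_false_iff] at *; all_goals omega)
      rw [g22, hd]; unfold ipT; split_ifs <;> first | (exfalso; omega) | (norm_num; done) | (exfalso; assumption) | (exfalso; simp only [false_and, and_false, false_or, or_false, true_and, and_true, true_or, or_true, not_true, not_false_iff] at *; all_goals omega)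
    · rcases (by omega : q = 3 ∨ 4 ≤ q) with rfl | hq4
      · have hd : dIPC n 2 3 = -(1/2) := by
          unfold dIPC
          simp only [aIC2, bIC2, XC2, hY2, aIC_mid n 3 hq3 hqn, bIC_mid n 3 hq3 hqn, XC_mid n 3 hq3 hqn, YC_mid n 3 hq3 hqn, zero_mul, mul_zero, ite_self]
          split_ifs <;> first | (exfalso; omega) | (norm_num; done) | linear_combination sq2/4 | linear_combination -sq2/4 | linear_combination sq2/2 | linear_combination -sq2/2 | linear_combination sq2 | linear_combination -sq2 | (exfalso; assumption) | (exfalso; simp only [false_and, and_false, false_or, or_false, true_and, and_true, true_or, or_true, not_true, not_false_iff] at *; all_goals omega)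
        rw [gIPC_hi_right 2 3 (by omega), hd]; unfold ipT; split_ifs <;> first | (exfalso; omega) | (norm_num; done) | (exfalso; assumption) | (exfalso; simp only [false_and, and_false, false_or, or_false, true_and, and_true, true_or, or_true, not_true, not_false_iff] at *; all_goals omega)
      · have hd : dIPC n 2 q = 0 := by
          unfold dIPC
          simp only [aIC2, bIC2, XC2, hY2, aIC_mid n q hq3 hqn, bIC_mid n q hq3 hqn, XC_mid n q hq3 hqn, YC_mid n q hq3 hqn, zero_mul, mul_zero, ite_self]
          split_ifs <;> first | (exfalso; omega) | (norm_num; done) | linear_combination sq2/4 | linear_combination -sq2/4 | linear_combination sq2/2 | linear_combination -sq2/2 | linear_combination sq2 | linear_combination -sq2 | (exfalso; assumption) | (exfalso; simp only [false_and, and_false, false_or, or_false, true_and, and_true, true_or, or_true, not_true, not_false_iff] at *; all_goals omega)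
        rw [gIPC_hi_right 2 q hq3, hd]; unfold ipT; split_ifs <;> first | (exfalso; omega) | (norm_num; done) | (exfalso; assumption) | (exfalso; simp only [false_and, and_false, false_or, or_false, true_and, and_true, true_or, or_true, not_true, not_false_iff] at *; all_goals omega)
    · have hd : dIPC n 2 (n+1) = 0 := by
        unfold dIPC
        simp only [aIC2, bIC2, XC2, hY2, aIC_top n hn, bIC_top n hn, XC_top n hn, YC_top n hn, zero_mul, mul_zero, ite_self]
        split_ifs <;> first | (exfalso; omega) | (norm_num; done) | linear_combination sq2/4 | linear_combination -sq2/4 | linear_combination sq2/2 | linear_combination -sq2/2 | linear_combination sq2 | linear_combination -sq2 | (exfalso; assumption) | (exfalso; simp only [false_and, and_false, false_or, or_false, true_and, and_true, true_or, or_true, not_true, not_false_iff] at *; all_goals omega)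
      rw [gIPC_hi_right 2 (n+1) (by omega), hd]; unfold ipT; split_ifs <;> first | (exfalso; omega) | (norm_num; done) | (exfalso; assumption) | (exfalso; simp only [false_and, and_false, false_or, or_false, true_and, and_true, true_or, or_true, not_true, not_false_iff] at *; all_goals omega)
  · rcases hQ with rfl | rfl | rfl | ⟨hq3, hqn⟩ | rfl
    · rw [gIPC_hi_left p 0 hp3, dIPC_lo_right n p 0 hn (by omega)]; unfold ipT; split_ifs <;> first | (exfalso; omega) | (norm_num; done) | (exfalso; assumption) | (exfalso; simp only [false_and, and_false, false_or, or_false, true_and, and_true, true_or, or_true, not_true, not_false_iff] at *; all_goals omega)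
    · rw [gIPC_hi_left p 1 hp3, dIPC_lo_right n p 1 hn (by omega)]; unfold ipT; split_ifs <;> first | (exfalso; omega) | (norm_num; done) | (exfalso; assumption) | (exfalso; simp only [false_and, and_false, false_or, or_false, true_and, and_true, true_or, or_true, not_true, not_false_iff] at *; all_goals omega)
    · rcases (by omega : p = 3 ∨ 4 ≤ p) with rfl | hp4
      · have hd : dIPC n 3 2 = -(1/2) := by
          unfold dIPC
          simp only [aIC2, bIC2, XC2, hY2, aIC_mid n 3 hp3 hpn, bIC_mid n 3 hp3 hpn, XC_mid n 3 hp3 hpn, YC_mid n 3 hp3 hpn, zero_mul, mul_zero, ite_self]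
          split_ifs <;> first | (exfalso; omega) | (norm_num; done) | linear_combination sq2/4 | linear_combination -sq2/4 | linear_combination sq2/2 | linear_combination -sq2/2 | linear_combination sq2 | linear_combination -sq2 | (exfalso; assumption) | (exfalso; simp only [false_and, and_false, false_or, or_false, true_and, and_true, true_or, or_true, not_true, not_false_iff] at *; all_goals omega)
        rw [gIPC_hi_left 3 2 (by omega), hd]; unfold ipT; split_ifs <;> first | (exfalso; omega) | (norm_num; done) | (exfalso; assumption) | (exfalso; simp only [false_and, and_false, false_or, or_false, true_and, and_true, true_or, or_true, not_true, not_false_iff] at *; all_goals omega)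
      · have hd : dIPC n p 2 = 0 := by
          unfold dIPC
          simp only [aIC2, bIC2, XC2, hY2, aIC_mid n p hp3 hpn, bIC_mid n p hp3 hpn, XC_mid n p hp3 hpn, YC_mid n p hp3 hpn, zero_mul, mul_zero, ite_self]
          split_ifs <;> first | (exfalso; omega) | (norm_num; done) | linear_combination sq2/4 | linear_combination -sq2/4 | linear_combination sq2/2 | linear_combination -sq2/2 | linear_combination sq2 | linear_combination -sq2 | (exfalso; assumption) | (exfalso; simp only [false_and, and_false, false_or, or_false, true_and, and_true, true_or, or_true, not_true, not_false_iff] at *; all_goals omega)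
        rw [gIPC_hi_left p 2 hp3, hd]; unfold ipT; split_ifs <;> first | (exfalso; omega) | (norm_num; done) | (exfalso; assumption) | (exfalso; simp only [false_and, and_false, false_or, or_false, true_and, and_true, true_or, or_true, not_true, not_false_iff] at *; all_goals omega)
    · rcases (by omega : q = p ∨ q = p + 1 ∨ p = q + 1 ∨ (¬q = p ∧ ¬q = p + 1 ∧ ¬p = q + 1))
        with hqp | hqp | hqp | ⟨hh1, hh2, hh3⟩
      · have hd : dIPC n p q = 1 := by
          unfold dIPC
          simp only [aIC_mid n p hp3 hpn, bIC_mid n p hp3 hpn, XC_mid n p hp3 hpn, YC_mid n p hp3 hpn, aIC_mid n q hq3 hqn, bIC_mid n q hq3 hqn, XC_mid n q hq3 hqn, YC_mid n q hq3 hqn, zero_mul, mul_zero, ite_self]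
          split_ifs <;> first | (exfalso; omega) | (norm_num; done) | linear_combination sq2/4 | linear_combination -sq2/4 | linear_combination sq2/2 | linear_combination -sq2/2 | linear_combination sq2 | linear_combination -sq2 | (exfalso; assumption) | (exfalso; simp only [false_and, and_false, false_or, or_false, true_and, and_true, true_or, or_true, not_true, not_false_iff] at *; all_goals omega)
        rw [gIPC_hi_left p q hp3, hd]; unfold ipT; split_ifs <;> first | (exfalso; omega) | (norm_num; done) | (exfalso; assumption) | (exfalso; simp only [false_and, and_false, false_or, or_false, true_and, and_true, true_or, or_true, not_true, not_false_iff] at *; all_goals omega)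
      · have hd : dIPC n p q = -(1/2) := by
          unfold dIPC
          simp only [aIC_mid n p hp3 hpn, bIC_mid n p hp3 hpn, XC_mid n p hp3 hpn, YC_mid n p hp3 hpn, aIC_mid n q hq3 hqn, bIC_mid n q hq3 hqn, XC_mid n q hq3 hqn, YC_mid n q hq3 hqn, zero_mul, mul_zero, ite_self]
          split_ifs <;> first | (exfalso; omega) | (norm_num; done) | linear_combination sq2/4 | linear_combination -sq2/4 | linear_combination sq2/2 | linear_combination -sq2/2 | linear_combination sq2 | linear_combination -sq2 | (exfalso; assumption) | (exfalso; simp only [false_and, and_false, false_or, or_false, true_and, and_true, true_or, or_true, not_true, not_false_iff] at *; all_goals omega)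
        rw [gIPC_hi_left p q hp3, hd]; unfold ipT; split_ifs <;> first | (exfalso; omega) | (norm_num; done) | (exfalso; assumption) | (exfalso; simp only [false_and, and_false, false_or, or_false, true_and, and_true, true_or, or_true, not_true, not_false_iff] at *; all_goals omega)
      · have hd : dIPC n p q = -(1/2) := by
          unfold dIPC
          simp only [aIC_mid n p hp3 hpn, bIC_mid n p hp3 hpn, XC_mid n p hp3 hpn, YC_mid n p hp3 hpn, aIC_mid n q hq3 hqn, bIC_mid n q hq3 hqn, XC_mid n q hq3 hqn, YC_mid n q hq3 hqn, zero_mul, mul_zero, ite_self]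
          split_ifs <;> first | (exfalso; omega) | (norm_num; done) | linear_combination sq2/4 | linear_combination -sq2/4 | linear_combination sq2/2 | linear_combination -sq2/2 | linear_combination sq2 | linear_combination -sq2 | (exfalso; assumption) | (exfalso; simp only [false_and, and_false, false_or, or_false, true_and, and_true, true_or, or_true, not_true, not_false_iff] at *; all_goals omega)
        rw [gIPC_hi_left p q hp3, hd]; unfold ipT; split_ifs <;> first | (exfalso; omega) | (norm_num; done) | (exfalso; assumption) | (exfalso; simp only [false_and, and_false, false_or, or_false, true_and, and_true, true_or, or_true, not_true, not_false_iff] at *; all_goals omega)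
      · have hd : dIPC n p q = 0 := by
          unfold dIPC
          simp only [aIC_mid n p hp3 hpn, bIC_mid n p hp3 hpn, XC_mid n p hp3 hpn, YC_mid n p hp3 hpn, aIC_mid n q hq3 hqn, bIC_mid n q hq3 hqn, XC_mid n q hq3 hqn, YC_mid n q hq3 hqn, zero_mul, mul_zero, ite_self]
          split_ifs <;> first | (exfalso; omega) | (norm_num; done) | linear_combination sq2/4 | linear_combination -sq2/4 | linear_combination sq2/2 | linear_combination -sq2/2 | linear_combination sq2 | linear_combination -sq2 | (exfalso; assumption) | (exfalso; simp only [false_and, and_false, false_or, or_false, true_and, and_true, true_or, or_true, not_true, not_false_iff] at *; all_goals omega)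
        rw [gIPC_hi_left p q hp3, hd]; unfold ipT; split_ifs <;> first | (exfalso; omega) | (norm_num; done) | (exfalso; assumption) | (exfalso; simp only [false_and, and_false, false_or, or_false, true_and, and_true, true_or, or_true, not_true, not_false_iff] at *; all_goals omega)
    · rcases (by omega : p = n ∨ p < n) with hpe | hpe
      · have hd : dIPC n p (n+1) = -1 := by
          unfold dIPC
          simp only [aIC_mid n p hp3 hpn, bIC_mid n p hp3 hpn, XC_mid n p hp3 hpn, YC_mid n p hp3 hpn, aIC_top n hn, bIC_top n hn, XC_top n hn, YC_top n hn, zero_mul, mul_zero, ite_self]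
          split_ifs <;> first | (exfalso; omega) | (norm_num; done) | linear_combination sq2/4 | linear_combination -sq2/4 | linear_combination sq2/2 | linear_combination -sq2/2 | linear_combination sq2 | linear_combination -sq2 | (exfalso; assumption) | (exfalso; simp only [false_and, and_false, false_or, or_false, true_and, and_true, true_or, or_true, not_true, not_false_iff] at *; all_goals omega)
        rw [gIPC_hi_left p (n+1) hp3, hd]; unfold ipT; split_ifs <;> first | (exfalso; omega) | (norm_num; done) | (exfalso; assumption) | (exfalso; simp only [false_and, and_false, false_or, or_false, true_and, and_true, true_or, or_true, not_true, not_false_iff] at *; all_goals omega)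
      · have hd : dIPC n p (n+1) = 0 := by
          unfold dIPC
          simp only [aIC_mid n p hp3 hpn, bIC_mid n p hp3 hpn, XC_mid n p hp3 hpn, YC_mid n p hp3 hpn, aIC_top n hn, bIC_top n hn, XC_top n hn, YC_top n hn, zero_mul, mul_zero, ite_self]
          split_ifs <;> first | (exfalso; omega) | (norm_num; done) | linear_combination sq2/4 | linear_combination -sq2/4 | linear_combination sq2/2 | linear_combination -sq2/2 | linear_combination sq2 | linear_combination -sq2 | (exfalso; assumption) | (exfalso; simp only [false_and, and_false, false_or, or_false, true_and, and_true, true_or, or_true, not_true, not_false_iff] at *; all_goals omega)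
        rw [gIPC_hi_left p (n+1) hp3, hd]; unfold ipT; split_ifs <;> first | (exfalso; omega) | (norm_num; done) | (exfalso; assumption) | (exfalso; simp only [false_and, and_false, false_or, or_false, true_and, and_true, true_or, or_true, not_true, not_false_iff] at *; all_goals omega)
  · rcases hQ with rfl | rfl | rfl | ⟨hq3, hqn⟩ | rfl
    · rw [gIPC_hi_left (n+1) 0 (by omega), dIPC_lo_right n (n+1) 0 hn (by omega)]
      unfold ipT; split_ifs <;> first | (exfalso; omega) | (norm_num; done) | (exfalso; assumption) | (exfalso; simp only [false_and, and_false, false_or, or_false, true_and, and_true, true_or, or_true, not_true, not_false_iff] at *; all_goals omega)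
    · rw [gIPC_hi_left (n+1) 1 (by omega), dIPC_lo_right n (n+1) 1 hn (by omega)]
      unfold ipT; split_ifs <;> first | (exfalso; omega) | (norm_num; done) | (exfalso; assumption) | (exfalso; simp only [false_and, and_false, false_or, or_false, true_and, and_true, true_or, or_true, not_true, not_false_iff] at *; all_goals omega)
    · have hd : dIPC n (n+1) 2 = 0 := by
        unfold dIPC
        simp only [aIC2, bIC2, XC2, hY2, aIC_top n hn, bIC_top n hn, XC_top n hn, YC_top n hn, zero_mul, mul_zero, ite_self]
        split_ifs <;> first | (exfalso; omega) | (norm_num; done) | linear_combination sq2/4 | linear_combination -sq2/4 | linear_combination sq2/2 | linear_combination -sq2/2 | linear_combination sq2 | linear_combination -sq2 | (exfalso; assumption) | (exfalso; simp only [false_and, and_false, false_or, or_false, true_and, and_true, true_or, or_true, not_true, not_false_iff] at *; all_goals omega)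
      rw [gIPC_hi_left (n+1) 2 (by omega), hd]; unfold ipT; split_ifs <;> first | (exfalso; omega) | (norm_num; done) | (exfalso; assumption) | (exfalso; simp only [false_and, and_false, false_or, or_false, true_and, and_true, true_or, or_true, not_true, not_false_iff] at *; all_goals omega)
    · rcases (by omega : q = n ∨ q < n) with hqe | hqe
      · have hd : dIPC n (n+1) q = -1 := by
          unfold dIPC
          simp only [aIC_mid n q hq3 hqn, bIC_mid n q hq3 hqn, XC_mid n q hq3 hqn, YC_mid n q hq3 hqn, aIC_top n hn, bIC_top n hn, XC_top n hn, YC_top n hn, zero_mul, mul_zero, ite_self]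
          split_ifs <;> first | (exfalso; omega) | (norm_num; done) | linear_combination sq2/4 | linear_combination -sq2/4 | linear_combination sq2/2 | linear_combination -sq2/2 | linear_combination sq2 | linear_combination -sq2 | (exfalso; assumption) | (exfalso; simp only [false_and, and_false, false_or, or_false, true_and, and_true, true_or, or_true, not_true, not_false_iff] at *; all_goals omega)
        rw [gIPC_hi_left (n+1) q (by omega), hd]; unfold ipT; split_ifs <;> first | (exfalso; omega) | (norm_num; done) | (exfalso; assumption) | (exfalso; simp only [false_and, and_false, false_or, or_false, true_and, and_true, true_or, or_true, not_true, not_false_iff] at *; all_goals omega)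
      · have hd : dIPC n (n+1) q = 0 := by
          unfold dIPC
          simp only [aIC_mid n q hq3 hqn, bIC_mid n q hq3 hqn, XC_mid n q hq3 hqn, YC_mid n q hq3 hqn, aIC_top n hn, bIC_top n hn, XC_top n hn, YC_top n hn, zero_mul, mul_zero, ite_self]
          split_ifs <;> first | (exfalso; omega) | (norm_num; done) | linear_combination sq2/4 | linear_combination -sq2/4 | linear_combination sq2/2 | linear_combination -sq2/2 | linear_combination sq2 | linear_combination -sq2 | (exfalso; assumption) | (exfalso; simp only [false_and, and_false, false_or, or_false, true_and, and_true, true_or, or_true, not_true, not_false_iff] at *; all_goals omega)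
        rw [gIPC_hi_left (n+1) q (by omega), hd]; unfold ipT; split_ifs <;> first | (exfalso; omega) | (norm_num; done) | (exfalso; assumption) | (exfalso; simp only [false_and, and_false, false_or, or_false, true_and, and_true, true_or, or_true, not_true, not_false_iff] at *; all_goals omega)
    · have hd : dIPC n (n+1) (n+1) = 2 := by
        unfold dIPC
        simp only [aIC_top n hn, bIC_top n hn, XC_top n hn, YC_top n hn, zero_mul, mul_zero, ite_self]
        split_ifs <;> first | (exfalso; omega) | (norm_num; done) | linear_combination sq2/4 | linear_combination -sq2/4 | linear_combination sq2/2 | linear_combination -sq2/2 | linear_combination sq2 | linear_combination -sq2 | (exfalso; assumption) | (exfalso; simp only [false_and, and_false, false_or, or_false, true_and, and_true, true_or, or_true, not_true, not_false_iff] at *; all_goals omega)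
      rw [gIPC_hi_left (n+1) (n+1) (by omega), hd]; unfold ipT; split_ifs <;> first | (exfalso; omega) | (norm_num; done) | (exfalso; assumption) | (exfalso; simp only [false_and, and_false, false_or, or_false, true_and, and_true, true_or, or_true, not_true, not_false_iff] at *; all_goals omega)
noncomputable def dilC (n p : ℕ) : Fin (n - 1) → ℝ := fun α =>
  (if α.val = aIC n p then XC n p else 0) + (if α.val = bIC n p then YC n p else 0)

lemma aIC_lt (n : ℕ) (hn : 3 ≤ n) (p : ℕ) : aIC n p < n - 1 := by
  unfold aIC; split_ifs <;> omega
lemma bIC_lt (n : ℕ) (hn : 3 ≤ n) (p : ℕ) : bIC n p < n - 1 := by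
  unfold bIC; split_ifs <;> omega

lemma sum_delta_mul' {k : ℕ} (a : ℕ) (ha : a < k) (x : ℝ) (g : Fin k → ℝ) :
    ∑ α : Fin k, (if (α : Fin k).val = a then x else 0) * g α = x * g ⟨a, ha⟩ := by
  rw [Finset.sum_eq_single (⟨a, ha⟩ : Fin k)]
  · simp
  · intro b _ hb
    have : (b : Fin k).val ≠ a := fun h => hb (Fin.ext h)
    simp [this]
  · intro h; exact absurd (Finset.mem_univ _) h

lemma sum_dd' {k : ℕ} (a b c d : ℕ) (ha : a < k) (hb : b < k) (x y x' y' : ℝ) :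
    ∑ α : Fin k, ((if α.val = a then x else 0) + (if α.val = b then y else 0)) *
      ((if α.val = c then x' else 0) + (if α.val = d then y' else 0))
    = (if a = c then x * x' else 0) + (if a = d then x * y' else 0)
      + (if b = c then y * x' else 0) + (if b = d then y * y' else 0) := by
  have expand : ∀ α : Fin k, ((if α.val = a then x else 0) + (if α.val = b then y else 0)) *
      ((if α.val = c then x' else 0) + (if α.val = d then y' else 0))
      = (if α.val = a then x else 0) * ((if α.val = c then x' else 0) + (if α.val = d then y' else 0))
        + (if α.val = b then y else 0) * ((if α.val = c then x' else 0) + (if α.val = d then y' else 0)) :=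
    fun α => by ring
  simp only [expand]
  rw [Finset.sum_add_distrib, sum_delta_mul' a ha, sum_delta_mul' b hb]
  simp only [Fin.val_mk]
  split_ifs <;> ring

set_option maxHeartbeats 1000000 in
lemma cartan_val (n : ℕ) (hn : 3 ≤ n) (p q : ℕ) (hp : p < n + 2) (hq : q < n + 2) :
    2 * ipT n p q / ipT n p p =
      (if p = q then 2
      else if (p = 0 ∧ q = 1) ∨ (q = 0 ∧ p = 1) then -1
      else if p = 1 ∧ q = 2 then -1
      else if p = 2 ∧ q = 1 then -2
      else if (p + 1 = q ∨ q + 1 = p) ∧ 2 ≤ p ∧ 2 ≤ q ∧ p ≤ n ∧ q ≤ n then -1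
      else if p = n ∧ q = n + 1 then -2
      else if p = n + 1 ∧ q = n then -1
      else 0 : ℝ) := by
  have hdiag : ipT n p p = if p ≤ 1 ∨ p = n + 1 then 2 else 1 := by
    unfold ipT; rw [if_pos rfl]
  rw [hdiag]; unfold ipT
  split_ifs <;> first | (exfalso; omega) | (norm_num; done) | (exfalso; assumption) |
    (exfalso; simp only [false_and, and_false, false_or, or_false, true_and, and_true,
      true_or, or_true, not_true, not_false_iff] at *; all_goals omega)

/-- (Cₙ sequence.) For `n ≥ 3`, on `ℝ³ × ℝ^{n−1}` the `n+2` dominant wall forms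
(0-based index `m` corresponding to labels `−1, 0, 1, …, n`):
`w_{−1} = e₃ − e₂`, `w₀ = e₂ − e₁`, `w₁ = e₁ − (√2/2)φ^{n−1}`,
`w_j = (√2/2)(φ^{n−j+1} − φ^{n−j})` for `2 ≤ j ≤ n−1`, `w_n = √2 φ¹`, have squared
norms `(w_{−1}|w_{−1}) = (w₀|w₀) = (w_n|w_n) = 2` and `(w_j|w_j) = 1` for
`1 ≤ j ≤ n−1`, and their Cartan matrix is that of the overextension `Cₙ^∧∧`:
`A_{ii} = 2`; `A_{−1,0} = A_{0,−1} = −1`; `A_{0,1} = −1`, `A_{1,0} = −2`;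
`A_{j,j+1} = A_{j+1,j} = −1` for `1 ≤ j ≤ n−2`; `A_{n−1,n} = −2`, `A_{n,n−1} = −1`;
all other entries `0`. (Label `i` ↦ `m = i+1`; `e_k`, `φ^k` ↦ coordinate `k−1`.) -/
theorem Cn_billiard (n : ℕ) (hn : 3 ≤ n)
    (w : Fin (n + 2) → (Fin 3 → ℝ) × (Fin (n - 1) → ℝ))
    (hw : ∀ m : Fin (n + 2), w m =
      if m.val = 0 then
        (fun l => (if l.val = 2 then (1 : ℝ) else 0) - (if l.val = 1 then 1 else 0),
          fun _ => 0)
      else if m.val = 1 then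
        (fun l => (if l.val = 1 then (1 : ℝ) else 0) - (if l.val = 0 then 1 else 0),
          fun _ => 0)
      else if m.val = 2 then
        (fun l => if l.val = 0 then (1 : ℝ) else 0,
          fun α => if α.val = n - 2 then -(Real.sqrt 2 / 2) else 0)
      else if m.val ≤ n then
        (fun _ => 0,
          fun α => Real.sqrt 2 / 2 * ((if α.val = n + 1 - m.val then (1 : ℝ) else 0)
            - (if α.val = n - m.val then 1 else 0)))
      else
        (fun _ => 0, fun α => if α.val = 0 then Real.sqrt 2 else 0))
    (A : Fin (n + 2) → Fin (n + 2) → ℝ)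
    (hA : ∀ i j, A i j = 2 * wallIPC n (w i) (w j) / wallIPC n (w i) (w i)) :
    (∀ m : Fin (n + 2), wallIPC n (w m) (w m) =
      if m.val = 0 ∨ m.val = 1 ∨ m.val = n + 1 then 2 else 1) ∧
    (∀ i j : Fin (n + 2), A i j =
      if i = j then 2
      else if (i.val = 0 ∧ j.val = 1) ∨ (j.val = 0 ∧ i.val = 1) then -1
      else if i.val = 1 ∧ j.val = 2 then -1
      else if i.val = 2 ∧ j.val = 1 then -2
      else if (i.val + 1 = j.val ∨ j.val + 1 = i.val)
          ∧ 2 ≤ i.val ∧ 2 ≤ j.val ∧ i.val ≤ n ∧ j.val ≤ n then -1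
      else if i.val = n ∧ j.val = n + 1 then -2
      else if i.val = n + 1 ∧ j.val = n then -1
      else 0) := by
  have hcanon : ∀ m : Fin (n + 2), w m = (gPartC m.val, dilC n m.val) := by
    intro m
    have hm : m.val < n + 2 := m.isLt
    rw [hw m]
    have hM : m.val = 0 ∨ m.val = 1 ∨ m.val = 2 ∨ (3 ≤ m.val ∧ m.val ≤ n) ∨ m.val = n + 1 := by
      omega
    rcases hM with h0 | h0 | h0 | ⟨h3, hmn⟩ | h0
    · rw [h0, if_pos rfl]
      refine Prod.ext ?_ ?_
      · simp [gPartC]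
      · funext α
        simp [dilC, XC_lo n 0 hn (by omega), YC_lo n 0 (by omega)]
    · rw [h0, if_neg (by omega), if_pos rfl]
      refine Prod.ext ?_ ?_
      · simp [gPartC]
      · funext α
        simp [dilC, XC_lo n 1 hn (by omega), YC_lo n 1 (by omega)]
    · rw [h0, if_neg (by omega), if_neg (by omega), if_pos rfl]
      refine Prod.ext ?_ ?_
      · simp [gPartC]
      · funext α
        simp [dilC, aIC2, bIC2, XC2, YC_lo n 2 (by omega)]
    · rw [if_neg (by omega), if_neg (by omega), if_neg (by omega), if_pos hmn]
      refine Prod.ext ?_ ?_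
      · simp only []
        rw [gPartC_hi m.val h3]
      · funext α
        simp only [dilC, aIC_mid n m.val h3 hmn, bIC_mid n m.val h3 hmn,
          XC_mid n m.val h3 hmn, YC_mid n m.val h3 hmn]
        split_ifs <;> ring
    · rw [if_neg (by omega), if_neg (by omega), if_neg (by omega), if_neg (by omega)]
      refine Prod.ext ?_ ?_
      · simp only []
        rw [gPartC_hi m.val (by omega)]
      · funext α
        rw [h0]
        simp [dilC, aIC_top n hn, bIC_top n hn, XC_top n hn, YC_top n hn]
  have hip : ∀ i j : Fin (n + 2),
      wallIPC n (w i) (w j) = gIPC i.val j.val + dIPC n i.val j.val := by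
    intro i j
    rw [hcanon i, hcanon j]
    have hs : (∑ α, dilC n i.val α * dilC n j.val α) = dIPC n i.val j.val := by
      unfold dilC dIPC
      exact sum_dd' (aIC n i.val) (bIC n i.val) (aIC n j.val) (bIC n j.val)
        (aIC_lt n hn i.val) (bIC_lt n hn i.val) (XC n i.val) (YC n i.val)
        (XC n j.val) (YC n j.val)
    simp only [wallIPC, gIPC]
    rw [hs]
  have hval : ∀ i j : Fin (n + 2), wallIPC n (w i) (w j) = ipT n i.val j.val :=
    fun i j => (hip i j).trans (ip_val n hn i.val j.val i.isLt j.isLt)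
  constructor
  · intro m
    rw [hval m m]
    unfold ipT
    rw [if_pos rfl]
    split_ifs <;> first | rfl | (exfalso; omega)
  · intro i j
    rw [hA i j, hval i j, hval i i]
    have := cartan_val n hn i.val j.val i.isLt j.isLt
    rw [this]
    by_cases h : i = j
    · rw [if_pos (show i.val = j.val from by rw [h]), if_pos h]
    · rw [if_neg (show ¬i.val = j.val from fun hv => h (Fin.ext hv)), if_neg h]
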